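/- Composition estimate for multi-site interactions: let ĥ ∈ 𝒜_ρ and Ĥ be analytic on (𝕋^ℕ_{ρ+‖ĥ‖_ρ})^{L+1} with ‖Ĥ‖_{L,ρ+‖ĥ‖_ρ} < ∞. Define Ψ[ĥ](σ) = Ĥ(σ + ĥ(σ)α, σ + ωα + ĥ(σ+ωα)α, …, σ + Lωα + ĥ(σ+Lωα)α). Then Ψ[ĥ] ∈ 𝒜_ρ and ‖Ψ[ĥ]‖_ρ ≤ ‖Ĥ‖_{L, ρ + ‖ĥ‖_ρ}. -/

import Mathlib

open MeasureTheory Complex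

/-- `⟨⟨j⟩⟩ = max {|j|, 1}` -/
noncomputable def jwt (j : ℕ) : ℝ := max (j : ℝ) 1

/-- `|k|_s = ∑_j ⟨⟨j⟩⟩^s |k_j|` for a finitely supported integer vector `k`. -/
noncomputable def swt (s : ℝ) (k : ℕ →₀ ℤ) : ℝ :=
  ∑ j ∈ k.support, jwt j ^ s * |(k j : ℝ)|

/-- `‖k‖₁ = ∑_j |k_j|`. -/
noncomputable def twt1 (k : ℕ →₀ ℤ) : ℝ := ∑ j ∈ k.support, |(k j : ℝ)|

/-- `∏_j (1 + ⟨⟨j⟩⟩^{1+τ} |k_j|^{1+τ})` -/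
noncomputable def dprod (τ : ℝ) (k : ℕ →₀ ℤ) : ℝ :=
  ∏ j ∈ k.support, (1 + jwt j ^ (1 + τ) * |(k j : ℝ)| ^ (1 + τ))

/-- `α · k` -/
noncomputable def adot (α : ℕ → ℝ) (k : ℕ →₀ ℤ) : ℝ :=
  ∑ j ∈ k.support, α j * (k j : ℝ)

/-- `k · σ` for complex `σ`. -/
noncomputable def cdot (k : ℕ →₀ ℤ) (σ : ℕ → ℂ) : ℂ :=
  ∑ j ∈ k.support, (k j : ℂ) * σ j

/-- The weighted ℓ¹ Fourier norm `‖h‖_ρ = ∑_k |h_k| e^{ρ |k|_s}` (valued in `ℝ≥0∞`). -/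
noncomputable def anorm (ρ s : ℝ) (h : (ℕ →₀ ℤ) → ℂ) : ENNReal :=
  ∑' k : ℕ →₀ ℤ, (‖h k‖₊ : ENNReal) * ENNReal.ofReal (Real.exp (ρ * swt s k))

/-- Evaluation of a Fourier coefficient family at a (complexified) point of the torus. -/
noncomputable def aeval (h : (ℕ →₀ ℤ) → ℂ) (σ : ℕ → ℂ) : ℂ :=
  ∑' k : ℕ →₀ ℤ, h k * Complex.exp (Complex.I * cdot k σ)

/-- The thickened infinite-dimensional torus (imaginary parts of width `ρ ⟨⟨j⟩⟩^s`). -/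
def Strip (ρ s : ℝ) : Set (ℕ → ℂ) := {σ | ∀ j, |(σ j).im| ≤ ρ * jwt j ^ s}

/-- `F` is represented on the strip of width `ρ` by the Fourier coefficients `c`. -/
def HasCoeffsOn (ρ s : ℝ) (F : (ℕ → ℂ) → ℂ) (c : (ℕ →₀ ℤ) → ℂ) : Prop :=
  ∀ σ ∈ Strip ρ s, HasSum (fun k : ℕ →₀ ℤ => c k * Complex.exp (Complex.I * cdot k σ)) (F σ)


/-- Norm `‖Ĥ‖_{L,R} = ∑_{(k₀,…,k_L)} |Ĥ(k₀,…,k_L)| e^{R ∑_j |k_j|_s}` for a multi-site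
interaction given by its Fourier coefficients. -/
noncomputable def hlnorm (L : ℕ) (R s : ℝ) (cH : (Fin (L + 1) → (ℕ →₀ ℤ)) → ℂ) :
    ENNReal :=
  ∑' K : Fin (L + 1) → (ℕ →₀ ℤ),
    (‖cH K‖₊ : ENNReal) * ENNReal.ofReal (Real.exp (R * ∑ j, swt s (K j)))

/-- Evaluation of a multi-site interaction at `L+1` (complexified) torus points. -/
noncomputable def meval (L : ℕ) (cH : (Fin (L + 1) → (ℕ →₀ ℤ)) → ℂ)
    (v : Fin (L + 1) → ℕ → ℂ) : ℂ :=
  ∑' K : Fin (L + 1) → (ℕ →₀ ℤ), cH K * Complex.exp (Complex.I * ∑ j, cdot (K j) (v j))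

/-- The composition operator
`Ψ[ĥ](σ) = Ĥ(σ + ĥ(σ)α, σ + ωα + ĥ(σ+ωα)α, …, σ + Lωα + ĥ(σ+Lωα)α)`. -/
noncomputable def psiOp (L : ℕ) (ω : ℝ) (α : ℕ → ℝ)
    (cH : (Fin (L + 1) → (ℕ →₀ ℤ)) → ℂ) (h : (ℕ →₀ ℤ) → ℂ) (σ : ℕ → ℂ) : ℂ :=
  meval L cH (fun j => fun m =>
    σ m + ((j : ℕ) : ℂ) * ω * α m +
      (α m : ℂ) * aeval h (fun m' => σ m' + ((j : ℕ) : ℂ) * ω * α m'))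


namespace Stmt9

abbrev V : Type := ℕ →₀ ℤ
abbrev Gam : Type := Σ n : ℕ, Fin n → V

lemma one_le_jwt (j : ℕ) : 1 ≤ jwt j := le_max_right _ _

lemma one_le_jwt_rpow {s : ℝ} (hs : 0 ≤ s) (j : ℕ) : 1 ≤ jwt j ^ s :=
  Real.one_le_rpow (one_le_jwt j) hs

lemma swt_eq_sum_subset (s : ℝ) (k : V) {T : Finset ℕ} (hT : k.support ⊆ T) :
    swt s k = ∑ j ∈ T, jwt j ^ s * |(k j : ℝ)| := by
  unfold swt
  refine Finset.sum_subset hT fun j _ hj => ?_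
  have : k j = 0 := Finsupp.notMem_support_iff.mp hj
  simp [this]

lemma swt_nonneg (s : ℝ) (k : V) : 0 ≤ swt s k := by
  refine Finset.sum_nonneg fun j _ => ?_
  have h1 : (0:ℝ) ≤ jwt j ^ s := Real.rpow_nonneg (le_trans zero_le_one (one_le_jwt j)) s
  positivity

lemma swt_zero (s : ℝ) : swt s (0 : V) = 0 := by simp [swt]

lemma swt_add_le (s : ℝ) (k k' : V) : swt s (k + k') ≤ swt s k + swt s k' := by
  rw [swt_eq_sum_subset s (k + k') (Finsupp.support_add),
      swt_eq_sum_subset s k (Finset.subset_union_left (s₂ := k'.support)),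
      swt_eq_sum_subset s k' (Finset.subset_union_right (s₁ := k.support)),
      ← Finset.sum_add_distrib]
  refine Finset.sum_le_sum fun j _ => ?_
  rw [← mul_add]
  refine mul_le_mul_of_nonneg_left ?_ (Real.rpow_nonneg (le_trans zero_le_one (one_le_jwt j)) s)
  have : ((k + k') j : ℝ) = (k j : ℝ) + (k' j : ℝ) := by push_cast [Finsupp.add_apply]; ring
  rw [this]; exact abs_add_le _ _

lemma swt_sum_le (s : ℝ) {ι : Type*} (t : Finset ι) (f : ι → V) :
    swt s (∑ i ∈ t, f i) ≤ ∑ i ∈ t, swt s (f i) := by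
  classical
  induction t using Finset.induction_on with
  | empty => simp [swt_zero]
  | insert a u hx ih =>
    rw [Finset.sum_insert hx, Finset.sum_insert hx]
    exact le_trans (swt_add_le s _ _) (by linarith)

lemma abs_adot_le {s : ℝ} (hs : 0 ≤ s) {α : ℕ → ℝ} (hα : ∀ j, α j ∈ Set.Icc (0:ℝ) 1)
    (k : V) : |adot α k| ≤ swt s k := by
  unfold adot swt
  refine le_trans (Finset.abs_sum_le_sum_abs _ _) (Finset.sum_le_sum fun j _ => ?_)
  rw [abs_mul]
  have h1 : |α j| ≤ 1 := abs_le.mpr ⟨by linarith [(hα j).1], (hα j).2⟩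
  have h2 : (0:ℝ) ≤ |(k j : ℝ)| := abs_nonneg _
  calc |α j| * |(k j : ℝ)| ≤ 1 * |(k j : ℝ)| := mul_le_mul_of_nonneg_right h1 h2
    _ ≤ jwt j ^ s * |(k j : ℝ)| := mul_le_mul_of_nonneg_right (one_le_jwt_rpow hs j) h2

lemma cdot_eq_sum_subset (k : V) (σ : ℕ → ℂ) {T : Finset ℕ} (hT : k.support ⊆ T) :
    cdot k σ = ∑ j ∈ T, (k j : ℂ) * σ j := by
  unfold cdot
  refine Finset.sum_subset hT fun j _ hj => ?_
  have : k j = 0 := Finsupp.notMem_support_iff.mp hj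
  simp [this]

lemma cdot_zero (σ : ℕ → ℂ) : cdot (0 : V) σ = 0 := by simp [cdot]

lemma cdot_add (k k' : V) (σ : ℕ → ℂ) : cdot (k + k') σ = cdot k σ + cdot k' σ := by
  rw [cdot_eq_sum_subset (k + k') σ (Finsupp.support_add),
      cdot_eq_sum_subset k σ (Finset.subset_union_left (s₂ := k'.support)),
      cdot_eq_sum_subset k' σ (Finset.subset_union_right (s₁ := k.support)),
      ← Finset.sum_add_distrib]
  refine Finset.sum_congr rfl fun j _ => ?_
  have : ((k + k') j : ℂ) = (k j : ℂ) + (k' j : ℂ) := by push_cast [Finsupp.add_apply]; ring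
  rw [this]; ring

lemma cdot_sum {ι : Type*} (t : Finset ι) (f : ι → V) (σ : ℕ → ℂ) :
    cdot (∑ i ∈ t, f i) σ = ∑ i ∈ t, cdot (f i) σ := by
  classical
  induction t using Finset.induction_on with
  | empty => simp [cdot_zero]
  | insert a u hx ih =>
    rw [Finset.sum_insert hx, Finset.sum_insert hx, cdot_add, ih]

lemma cdot_shift (k : V) (τ : ℕ → ℂ) (c : ℂ) (β : ℕ → ℝ) :
    cdot k (fun m => τ m + c * (β m : ℂ)) = cdot k τ + c * ((adot β k : ℝ) : ℂ) := by
  unfold cdot adot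
  push_cast
  rw [Finset.mul_sum, ← Finset.sum_add_distrib]
  refine Finset.sum_congr rfl fun j _ => ?_
  ring

lemma cdot_im (k : V) (σ : ℕ → ℂ) : (cdot k σ).im = ∑ j ∈ k.support, (k j : ℝ) * (σ j).im := by
  unfold cdot
  rw [Complex.im_sum]
  refine Finset.sum_congr rfl fun j _ => ?_
  simp [Complex.mul_im]

lemma norm_exp_I_mul (z : ℂ) : ‖Complex.exp (Complex.I * z)‖ = Real.exp (-z.im) := by
  rw [Complex.norm_exp]
  congr 1
  simp [Complex.mul_re]

lemma norm_exp_I_mul_ofReal (r : ℝ) : ‖Complex.exp (Complex.I * (r : ℂ))‖ = 1 := by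
  rw [norm_exp_I_mul]; simp

lemma norm_exp_I_cdot_le {ρ s : ℝ} (hρ : 0 ≤ ρ) {σ : ℕ → ℂ} (hσ : σ ∈ Strip ρ s) (k : V) :
    ‖Complex.exp (Complex.I * cdot k σ)‖ ≤ Real.exp (ρ * swt s k) := by
  rw [norm_exp_I_mul]
  refine Real.exp_le_exp.mpr ?_
  rw [cdot_im]
  have : ρ * swt s k = ∑ j ∈ k.support, |(k j : ℝ)| * (ρ * jwt j ^ s) := by
    rw [swt, Finset.mul_sum]; exact Finset.sum_congr rfl fun j _ => by ring
  rw [this, ← Finset.sum_neg_distrib]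
  refine Finset.sum_le_sum fun j _ => ?_
  calc -((k j : ℝ) * (σ j).im) ≤ |(k j : ℝ) * (σ j).im| := neg_le_abs _
    _ = |(k j : ℝ)| * |(σ j).im| := abs_mul _ _
    _ ≤ |(k j : ℝ)| * (ρ * jwt j ^ s) := mul_le_mul_of_nonneg_left (hσ j) (abs_nonneg _)

/-- extraction of real summability/value from a finite weighted `ℝ≥0∞` sum -/
lemma summable_of_enn_ne_top {ι : Type*} {f : ι → ℂ} {r : ι → ℝ}
    (hfin : (∑' i, (‖f i‖₊ : ENNReal) * ENNReal.ofReal (Real.exp (r i))) ≠ ⊤) :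
    Summable (fun i => ‖f i‖ * Real.exp (r i)) ∧
      (∑' i, (‖f i‖₊ : ENNReal) * ENNReal.ofReal (Real.exp (r i))).toReal
        = ∑' i, ‖f i‖ * Real.exp (r i) := by
  have hterm : ∀ i, (‖f i‖₊ : ENNReal) * ENNReal.ofReal (Real.exp (r i))
      = ((‖f i‖₊ * Real.toNNReal (Real.exp (r i)) : NNReal) : ENNReal) := by
    intro i
    rw [ENNReal.coe_mul, ENNReal.ofReal]
  have hsum : Summable (fun i => (‖f i‖₊ * Real.toNNReal (Real.exp (r i)) : NNReal)) := by
    rw [← ENNReal.tsum_coe_ne_top_iff_summable]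
    simpa only [← hterm] using hfin
  have hcoe : ∀ i, ((‖f i‖₊ * Real.toNNReal (Real.exp (r i)) : NNReal) : ℝ)
      = ‖f i‖ * Real.exp (r i) := by
    intro i
    push_cast
    rw [Real.coe_toNNReal _ (Real.exp_nonneg _)]
  constructor
  · have := NNReal.summable_coe.mpr hsum
    simpa only [hcoe] using this
  · rw [funext hterm, ENNReal.tsum_toReal_eq (fun i => ENNReal.coe_ne_top)]
    refine tsum_congr fun i => ?_
    rw [ENNReal.coe_toReal, hcoe]

end Stmt9

namespace Stmt9

set_option maxHeartbeats 1000000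

/-- `ℝ≥0∞`: tsum over a Pi type of a product equals product of tsums. -/
lemma enn_tsum_pi : ∀ (N : ℕ) {Γ' : Type} (g : Fin N → Γ' → ENNReal),
    ∑' T : Fin N → Γ', ∏ j, g j (T j) = ∏ j, ∑' x, g j x := by
  intro N
  induction N with
  | zero =>
    intro Γ' g
    simp only [Finset.univ_eq_empty, Finset.prod_empty]
    exact tsum_eq_single (fun i => i.elim0) (fun b hb => absurd (funext fun i => i.elim0) hb)
  | succ N ih =>
    intro Γ' g
    rw [← Equiv.tsum_eq (Fin.consEquiv (fun _ : Fin (N + 1) => Γ'))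
      (fun T => ∏ j, g j (T j))]
    have hterm : ∀ p : Γ' × (Fin N → Γ'),
        (∏ j, g j ((Fin.consEquiv (fun _ => Γ')) p j))
          = g 0 p.1 * ∏ j : Fin N, g j.succ (p.2 j) := by
      intro p
      rw [Fin.prod_univ_succ]
      simp [Fin.consEquiv]
    rw [tsum_congr hterm, ENNReal.tsum_prod']
    simp_rw [ENNReal.tsum_mul_left, ENNReal.tsum_mul_right]
    rw [ih (fun j x => g j.succ x), Fin.prod_univ_succ]

/-- Pi-type product `HasSum` for complete normed commutative rings. -/
lemma hasSum_pi {R : Type} [NormedCommRing R] [CompleteSpace R] :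
    ∀ (N : ℕ) {Γ' : Type} (f : Fin N → Γ' → R),
    (∀ j, Summable fun x => ‖f j x‖) →
    HasSum (fun T : Fin N → Γ' => ∏ j, f j (T j)) (∏ j, ∑' x, f j x) ∧
      Summable (fun T : Fin N → Γ' => ‖∏ j, f j (T j)‖) := by
  intro N
  induction N with
  | zero =>
    intro Γ' f _
    constructor
    · simp only [Finset.univ_eq_empty, Finset.prod_empty]
      have := hasSum_single (f := fun _ : Fin 0 → Γ' => (1 : R)) (fun i => i.elim0)
        (fun b hb => absurd (funext fun i => i.elim0) hb)
      simpa using this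
    · exact Summable.of_finite
  | succ N ih =>
    intro Γ' f hf
    obtain ⟨ihHas, ihSumm⟩ := ih (fun j => f j.succ) (fun j => hf j.succ)
    set e := Fin.consEquiv (fun _ : Fin (N + 1) => Γ') with he
    have hterm : ∀ p : Γ' × (Fin N → Γ'),
        (∏ j, f j (e p j)) = f 0 p.1 * ∏ j : Fin N, f j.succ (p.2 j) := by
      intro p
      rw [Fin.prod_univ_succ]
      simp [he, Fin.consEquiv]
    have hnorm2 : Summable fun p : Γ' × (Fin N → Γ') =>
        ‖f 0 p.1 * ∏ j : Fin N, f j.succ (p.2 j)‖ :=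
      Summable.mul_norm (f := f 0)
        (g := fun T : Fin N → Γ' => ∏ j : Fin N, f j.succ (T j)) (hf 0) ihSumm
    have hmul : HasSum (fun p : Γ' × (Fin N → Γ') => f 0 p.1 * ∏ j : Fin N, f j.succ (p.2 j))
        ((∑' x, f 0 x) * ∏ j : Fin N, ∑' x, f j.succ x) :=
      HasSum.mul (f := f 0) (g := fun T : Fin N → Γ' => ∏ j : Fin N, f j.succ (T j))
        ((hf 0).of_norm.hasSum) ihHas hnorm2.of_norm
    constructor
    · rw [Fin.prod_univ_succ, ← Equiv.hasSum_iff e]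
      have : ((fun T : Fin (N + 1) → Γ' => ∏ j, f j (T j)) ∘ e)
          = fun p => f 0 p.1 * ∏ j : Fin N, f j.succ (p.2 j) := funext hterm
      rw [this]
      exact hmul
    · rw [← Equiv.summable_iff e]
      have : ((fun T : Fin (N + 1) → Γ' => ‖∏ j, f j (T j)‖) ∘ e)
          = fun p => ‖f 0 p.1 * ∏ j : Fin N, f j.succ (p.2 j)‖ := by
        funext p
        simp only [Function.comp_apply, hterm p]
      rw [this]
      exact hnorm2

lemma gamma_lemma {K : Type} [RCLike K] (g : V → K) (hg : Summable fun k => ‖g k‖) (z : K) :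
    Summable (fun γ : Gam => ‖z ^ γ.1 / (γ.1.factorial : K) * ∏ i, g (γ.2 i)‖) ∧
    HasSum (fun γ : Gam => z ^ γ.1 / (γ.1.factorial : K) * ∏ i, g (γ.2 i))
      (NormedSpace.exp (z * ∑' k, g k)) := by
  set A := ∑' k, g k with hA
  set Bg := ∑' k, ‖g k‖ with hBg
  have hgn : ∀ n : ℕ, HasSum (fun κ : Fin n → V => ∏ i, g (κ i)) (A ^ n) ∧
      Summable (fun κ : Fin n → V => ‖∏ i, g (κ i)‖) := by
    intro n
    have := hasSum_pi n (fun _ : Fin n => g) (fun _ => hg)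
    rwa [Finset.prod_const, Finset.card_univ, Fintype.card_fin, ← hA] at this
  have hgnorm : ∀ n : ℕ, HasSum (fun κ : Fin n → V => ∏ i, ‖g (κ i)‖) (Bg ^ n) := by
    intro n
    have hs : Summable fun k => ‖‖g k‖‖ := by
      simpa only [norm_norm] using hg
    have := (hasSum_pi n (fun _ : Fin n => fun k => ‖g k‖) (fun _ => hs)).1
    rwa [Finset.prod_const, Finset.card_univ, Fintype.card_fin, ← hBg] at this
  have hnormval : ∀ (n : ℕ) (κ : Fin n → V),
      ‖z ^ n / (n.factorial : K) * ∏ i, g (κ i)‖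
        = ‖z‖ ^ n / (n.factorial : ℝ) * ∏ i, ‖g (κ i)‖ := by
    intro n κ
    rw [norm_mul, norm_div, norm_pow, norm_prod]
    congr 2
    simp
  have hfibsum : ∀ n : ℕ, HasSum (fun κ : Fin n → V =>
      ‖z ^ n / (n.factorial : K) * ∏ i, g (κ i)‖)
      (‖z‖ ^ n / (n.factorial : ℝ) * Bg ^ n) := by
    intro n
    have heq : (fun κ : Fin n → V => ‖z ^ n / (n.factorial : K) * ∏ i, g (κ i)‖)
        = fun κ => ‖z‖ ^ n / (n.factorial : ℝ) * ∏ i, ‖g (κ i)‖ := funext (hnormval n)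
    rw [heq]
    exact (hgnorm n).mul_left _
  have hsummNorm : Summable (fun γ : Gam =>
      ‖z ^ γ.1 / (γ.1.factorial : K) * ∏ i, g (γ.2 i)‖) := by
    refine (summable_sigma_of_nonneg (fun γ => norm_nonneg _)).mpr
      ⟨fun n => (hfibsum n).summable, ?_⟩
    have heq : (fun n : ℕ => ∑' κ : Fin n → V, ‖z ^ n / (n.factorial : K) * ∏ i, g (κ i)‖)
        = fun n : ℕ => (‖z‖ * Bg) ^ n / (n.factorial : ℝ) := by
      funext n
      rw [(hfibsum n).tsum_eq, mul_pow]
      ring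
    rw [heq]
    exact (NormedSpace.expSeries_div_hasSum_exp (‖z‖ * Bg)).summable
  refine ⟨hsummNorm, ?_⟩
  have hsumm : Summable (fun γ : Gam => z ^ γ.1 / (γ.1.factorial : K) * ∏ i, g (γ.2 i)) :=
    hsummNorm.of_norm
  have htsum : ∑' γ : Gam, (z ^ γ.1 / (γ.1.factorial : K) * ∏ i, g (γ.2 i))
      = NormedSpace.exp (z * A) := by
    rw [Summable.tsum_sigma' (f := fun γ : Gam => z ^ γ.1 / (γ.1.factorial : K) * ∏ i, g (γ.2 i))
      (fun n => (hfibsum n).summable.of_norm) hsumm]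
    have h1 : ∀ n : ℕ, ∑' κ : Fin n → V, z ^ n / (n.factorial : K) * ∏ i, g (κ i)
        = (z * A) ^ n / (n.factorial : K) := by
      intro n
      rw [(((hgn n).1).mul_left _).tsum_eq, mul_pow]
      ring
    rw [tsum_congr h1]
    exact (NormedSpace.expSeries_div_hasSum_exp (z * A)).tsum_eq
  exact htsum ▸ hsumm.hasSum

end Stmt9

namespace Stmt9

noncomputable def nh (ρ s : ℝ) (h : V → ℂ) (k : V) : ℝ := ‖h k‖ * Real.exp (ρ * swt s k)

noncomputable def zc (α : ℕ → ℝ) (k : V) : ℂ := Complex.I * ((adot α k : ℝ) : ℂ)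

noncomputable def wc (ω : ℝ) (α : ℕ → ℝ) (j : ℕ) (k : V) : ℂ :=
  (((j : ℝ) * ω * adot α k : ℝ) : ℂ)

noncomputable def fCoef (ω : ℝ) (α : ℕ → ℝ) (h : V → ℂ) (j : ℕ) (k : V) (γ : Gam) : ℂ :=
  Complex.exp (Complex.I * wc ω α j k) * (zc α k ^ γ.1 / (γ.1.factorial : ℂ)) *
    ∏ i, (h (γ.2 i) * Complex.exp (Complex.I * wc ω α j (γ.2 i)))

abbrev Lam (L : ℕ) : Type := (Fin (L + 1) → V) × (Fin (L + 1) → Gam)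

noncomputable def acoef (ω : ℝ) (α : ℕ → ℝ) (L : ℕ) (cH : (Fin (L + 1) → V) → ℂ)
    (h : V → ℂ) (p : Lam L) : ℂ :=
  cH p.1 * ∏ j : Fin (L + 1), fCoef ω α h (j : ℕ) (p.1 j) (p.2 j)

noncomputable def Mdx (L : ℕ) (p : Lam L) : V :=
  ∑ j : Fin (L + 1), (p.1 j + ∑ i, (p.2 j).2 i)

noncomputable def dfun (ρ s : ℝ) (h : V → ℂ) (k : V) (γ : Gam) : ℝ :=
  swt s k ^ γ.1 / (γ.1.factorial : ℝ) * ∏ i, nh ρ s h (γ.2 i)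

noncomputable def Dfun (ρ s : ℝ) (L : ℕ) (cH : (Fin (L + 1) → V) → ℂ) (h : V → ℂ)
    (p : Lam L) : ℝ :=
  (‖cH p.1‖ * Real.exp (ρ * ∑ j : Fin (L + 1), swt s (p.1 j)))
    * ∏ j : Fin (L + 1), dfun ρ s h (p.1 j) (p.2 j)

noncomputable def uvec (ω : ℝ) (α : ℕ → ℝ) (σ : ℕ → ℂ) (j : ℕ) : ℕ → ℂ :=
  fun m => σ m + ((j : ℕ) : ℂ) * (ω : ℂ) * (α m : ℂ)

noncomputable def ffun (ω : ℝ) (α : ℕ → ℝ) (h : V → ℂ) (σ : ℕ → ℂ) (j : ℕ) (k : V)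
    (γ : Gam) : ℂ :=
  Complex.exp (Complex.I * cdot k (uvec ω α σ j)) * (zc α k ^ γ.1 / (γ.1.factorial : ℂ)) *
    ∏ i, (h (γ.2 i) * Complex.exp (Complex.I * cdot (γ.2 i) (uvec ω α σ j)))

section lemmas

variable {ρ s ω : ℝ} {α : ℕ → ℝ} {h : V → ℂ} {L : ℕ} {cH : (Fin (L + 1) → V) → ℂ}

lemma cdot_uvec (σ : ℕ → ℂ) (j : ℕ) (k : V) :
    cdot k (uvec ω α σ j) = cdot k σ + wc ω α j k := by
  have h1 : uvec ω α σ j = fun m => σ m + (((j : ℕ) : ℂ) * (ω : ℂ)) * ((α m : ℝ) : ℂ) := by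
    funext m; unfold uvec; ring
  rw [h1, cdot_shift k σ (((j : ℕ) : ℂ) * (ω : ℂ)) α]
  congr 1
  unfold wc
  push_cast
  ring

lemma exp_cdot_uvec (σ : ℕ → ℂ) (j : ℕ) (k : V) :
    Complex.exp (Complex.I * cdot k (uvec ω α σ j))
      = Complex.exp (Complex.I * cdot k σ) * Complex.exp (Complex.I * wc ω α j k) := by
  rw [cdot_uvec, mul_add, Complex.exp_add]

lemma norm_exp_I_wc (j : ℕ) (k : V) : ‖Complex.exp (Complex.I * wc ω α j k)‖ = 1 :=
  norm_exp_I_mul_ofReal _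

lemma uvec_mem_strip {σ : ℕ → ℂ} (hσ : σ ∈ Strip ρ s) (j : ℕ) : uvec ω α σ j ∈ Strip ρ s := by
  intro m
  have heq : (uvec ω α σ j m).im = (σ m).im := by
    unfold uvec
    have h2 : (((j : ℕ) : ℂ) * (ω : ℂ) * (α m : ℂ)) = (((j : ℝ) * ω * α m : ℝ) : ℂ) := by
      push_cast; ring
    rw [h2, Complex.add_im, Complex.ofReal_im, add_zero]
  rw [heq]
  exact hσ m

lemma ffun_eq (σ : ℕ → ℂ) (j : ℕ) (k : V) (γ : Gam) :
    ffun ω α h σ j k γ = fCoef ω α h j k γ *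
      (Complex.exp (Complex.I * cdot k σ)
        * Complex.exp (Complex.I * ∑ i, cdot (γ.2 i) σ)) := by
  unfold ffun fCoef
  rw [exp_cdot_uvec, Finset.mul_sum, Complex.exp_sum]
  have hterm : ∀ i ∈ Finset.univ (α := Fin γ.1),
      h (γ.2 i) * Complex.exp (Complex.I * cdot (γ.2 i) (uvec ω α σ j))
        = (h (γ.2 i) * Complex.exp (Complex.I * wc ω α j (γ.2 i)))
          * Complex.exp (Complex.I * cdot (γ.2 i) σ) := by
    intro i _
    rw [exp_cdot_uvec]
    ring
  rw [Finset.prod_congr rfl hterm, Finset.prod_mul_distrib]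
  ring

lemma acoef_exp_eq (σ : ℕ → ℂ) (p : Lam L) :
    cH p.1 * ∏ j : Fin (L + 1), ffun ω α h σ (j : ℕ) (p.1 j) (p.2 j)
      = acoef ω α L cH h p * Complex.exp (Complex.I * cdot (Mdx L p) σ) := by
  unfold acoef Mdx
  rw [cdot_sum, Finset.mul_sum, Complex.exp_sum]
  have hj : ∀ j ∈ Finset.univ (α := Fin (L + 1)),
      Complex.exp (Complex.I * cdot (p.1 j + ∑ i, (p.2 j).2 i) σ)
        = Complex.exp (Complex.I * cdot (p.1 j) σ)
          * Complex.exp (Complex.I * ∑ i, cdot ((p.2 j).2 i) σ) := by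
    intro j _
    rw [cdot_add, cdot_sum, mul_add, Complex.exp_add]
  rw [Finset.prod_congr rfl hj]
  have hffun : ∀ j ∈ Finset.univ (α := Fin (L + 1)),
      ffun ω α h σ (j : ℕ) (p.1 j) (p.2 j)
        = fCoef ω α h (j : ℕ) (p.1 j) (p.2 j) *
          (Complex.exp (Complex.I * cdot (p.1 j) σ)
            * Complex.exp (Complex.I * ∑ i, cdot ((p.2 j).2 i) σ)) :=
    fun j _ => ffun_eq σ (j : ℕ) (p.1 j) (p.2 j)
  rw [Finset.prod_congr rfl hffun, Finset.prod_mul_distrib]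
  ring

lemma norm_fCoef (j : ℕ) (k : V) (γ : Gam) :
    ‖fCoef ω α h j k γ‖
      = |adot α k| ^ γ.1 / (γ.1.factorial : ℝ) * ∏ i, ‖h (γ.2 i)‖ := by
  unfold fCoef
  rw [norm_mul, norm_mul, norm_prod]
  have h2 : ‖zc α k ^ γ.1 / ((γ.1.factorial : ℕ) : ℂ)‖
      = |adot α k| ^ γ.1 / (γ.1.factorial : ℝ) := by
    rw [norm_div, norm_pow]
    have hz : ‖zc α k‖ = |adot α k| := by
      unfold zc
      rw [norm_mul, Complex.norm_I, one_mul, Complex.norm_real, Real.norm_eq_abs]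
    rw [hz]
    congr 1
    simp
  have h3 : ∀ i ∈ Finset.univ (α := Fin γ.1),
      ‖h (γ.2 i) * Complex.exp (Complex.I * wc ω α j (γ.2 i))‖ = ‖h (γ.2 i)‖ := by
    intro i _
    rw [norm_mul, norm_exp_I_wc, mul_one]
  rw [norm_exp_I_wc, one_mul, h2, Finset.prod_congr rfl h3]

lemma nh_nonneg (k : V) : 0 ≤ nh ρ s h k :=
  mul_nonneg (norm_nonneg _) (Real.exp_nonneg _)

lemma dfun_nonneg (k : V) (γ : Gam) : 0 ≤ dfun ρ s h k γ :=
  mul_nonneg (div_nonneg (pow_nonneg (swt_nonneg s k) _) (Nat.cast_nonneg _))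
    (Finset.prod_nonneg fun i _ => nh_nonneg _)

lemma norm_fCoef_mul_le (hs : 0 ≤ s) (hα : ∀ j, α j ∈ Set.Icc (0:ℝ) 1)
    (j : ℕ) (k : V) (γ : Gam) :
    ‖fCoef ω α h j k γ‖ * ∏ i, Real.exp (ρ * swt s ((γ.2 i)))
      ≤ dfun ρ s h k γ := by
  rw [norm_fCoef]
  unfold dfun
  rw [mul_assoc, ← Finset.prod_mul_distrib]
  have hterm : (∏ i, (‖h (γ.2 i)‖ * Real.exp (ρ * swt s (γ.2 i))))
      = ∏ i, nh ρ s h (γ.2 i) := Finset.prod_congr rfl fun i _ => rfl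
  rw [hterm]
  refine mul_le_mul_of_nonneg_right ?_ (Finset.prod_nonneg fun i _ => nh_nonneg _)
  have h4 : |adot α k| ^ γ.1 ≤ swt s k ^ γ.1 :=
    pow_le_pow_left₀ (abs_nonneg _) (abs_adot_le hs hα k) _
  have hfac : (0:ℝ) ≤ (γ.1.factorial : ℝ) := Nat.cast_nonneg _
  gcongr

lemma norm_acoef_le (hρ : 0 ≤ ρ) (hs : 0 ≤ s) (hα : ∀ j, α j ∈ Set.Icc (0:ℝ) 1) (p : Lam L) :
    ‖acoef ω α L cH h p‖ * Real.exp (ρ * swt s (Mdx L p)) ≤ Dfun ρ s L cH h p := by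
  have h1 : ‖acoef ω α L cH h p‖
      = ‖cH p.1‖ * ∏ j : Fin (L + 1), ‖fCoef ω α h (j : ℕ) (p.1 j) (p.2 j)‖ := by
    unfold acoef; rw [norm_mul, norm_prod]
  have h2 : swt s (Mdx L p)
      ≤ ∑ j : Fin (L + 1), (swt s (p.1 j) + ∑ i, swt s ((p.2 j).2 i)) := by
    refine le_trans (swt_sum_le s _ _) (Finset.sum_le_sum fun j _ => ?_)
    refine le_trans (swt_add_le s _ _) ?_
    gcongr
    exact swt_sum_le s _ _
  have h3 : Real.exp (ρ * swt s (Mdx L p))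
      ≤ ∏ j : Fin (L + 1),
        (Real.exp (ρ * swt s (p.1 j)) * ∏ i, Real.exp (ρ * swt s ((p.2 j).2 i))) := by
    have hR : (∏ j : Fin (L + 1),
        (Real.exp (ρ * swt s (p.1 j)) * ∏ i, Real.exp (ρ * swt s ((p.2 j).2 i))))
        = Real.exp (∑ j : Fin (L + 1),
            (ρ * swt s (p.1 j) + ∑ i, ρ * swt s ((p.2 j).2 i))) := by
      rw [Real.exp_sum]
      refine Finset.prod_congr rfl fun j _ => ?_
      rw [Real.exp_add, Real.exp_sum]
    rw [hR]
    refine Real.exp_le_exp.mpr ?_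
    calc ρ * swt s (Mdx L p)
        ≤ ρ * ∑ j : Fin (L + 1), (swt s (p.1 j) + ∑ i, swt s ((p.2 j).2 i)) :=
          mul_le_mul_of_nonneg_left h2 hρ
      _ = ∑ j : Fin (L + 1), (ρ * swt s (p.1 j) + ∑ i, ρ * swt s ((p.2 j).2 i)) := by
          rw [Finset.mul_sum]
          refine Finset.sum_congr rfl fun j _ => ?_
          rw [mul_add, Finset.mul_sum]
  calc ‖acoef ω α L cH h p‖ * Real.exp (ρ * swt s (Mdx L p))
      ≤ (‖cH p.1‖ * ∏ j : Fin (L + 1), ‖fCoef ω α h (j : ℕ) (p.1 j) (p.2 j)‖)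
        * ∏ j : Fin (L + 1),
          (Real.exp (ρ * swt s (p.1 j)) * ∏ i, Real.exp (ρ * swt s ((p.2 j).2 i))) := by
        rw [h1]
        exact mul_le_mul_of_nonneg_left h3
          (mul_nonneg (norm_nonneg _) (Finset.prod_nonneg fun j _ => norm_nonneg _))
    _ = ‖cH p.1‖ * ∏ j : Fin (L + 1),
          (Real.exp (ρ * swt s (p.1 j)) *
            (‖fCoef ω α h (j : ℕ) (p.1 j) (p.2 j)‖ * ∏ i, Real.exp (ρ * swt s ((p.2 j).2 i)))) := by
        rw [mul_assoc, ← Finset.prod_mul_distrib]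
        congr 1
        refine Finset.prod_congr rfl fun j _ => ?_
        ring
    _ ≤ ‖cH p.1‖ * ∏ j : Fin (L + 1),
          (Real.exp (ρ * swt s (p.1 j)) * dfun ρ s h (p.1 j) (p.2 j)) := by
        refine mul_le_mul_of_nonneg_left ?_ (norm_nonneg _)
        refine Finset.prod_le_prod (fun j _ => mul_nonneg (Real.exp_nonneg _)
          (mul_nonneg (norm_nonneg _) (Finset.prod_nonneg fun i _ => Real.exp_nonneg _)))
          (fun j _ => ?_)
        exact mul_le_mul_of_nonneg_left (norm_fCoef_mul_le hs hα _ _ _) (Real.exp_nonneg _)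
    _ = Dfun ρ s L cH h p := by
        unfold Dfun
        rw [Finset.prod_mul_distrib, ← Real.exp_sum, ← Finset.mul_sum]
        ring

end lemmas

end Stmt9

namespace Stmt9

section analysis

variable {ρ s ω : ℝ} {α : ℕ → ℝ} {h : V → ℂ} {L : ℕ} {cH : (Fin (L + 1) → V) → ℂ}

lemma dfun_gamma (hhs : Summable (nh ρ s h)) (k : V) :
    HasSum (dfun ρ s h k) (Real.exp (swt s k * ∑' k', nh ρ s h k')) ∧
      Summable fun γ : Gam => ‖dfun ρ s h k γ‖ := by
  have hg : Summable fun k' => ‖nh ρ s h k'‖ :=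
    hhs.congr fun k' => (Real.norm_of_nonneg (nh_nonneg _)).symm
  obtain ⟨hn, hsum⟩ := gamma_lemma (nh ρ s h) hg (swt s k)
  have hdef : dfun ρ s h k
      = fun γ : Gam => swt s k ^ γ.1 / (γ.1.factorial : ℝ) * ∏ i, nh ρ s h (γ.2 i) := rfl
  rw [hdef]
  refine ⟨?_, hn⟩
  rw [Real.exp_eq_exp_ℝ]
  exact hsum

lemma Dfun_nonneg (p : Lam L) : 0 ≤ Dfun ρ s L cH h p :=
  mul_nonneg (mul_nonneg (norm_nonneg _) (Real.exp_nonneg _))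
    (Finset.prod_nonneg fun j _ => dfun_nonneg _ _)

lemma Dfun_props (hhs : Summable (nh ρ s h)) {R : ℝ} (hRB : R = ρ + ∑' k, nh ρ s h k)
    (hcH : Summable (fun K : Fin (L + 1) → V =>
      ‖cH K‖ * Real.exp (R * ∑ j : Fin (L + 1), swt s (K j)))) :
    Summable (Dfun ρ s L cH h) ∧
      ∑' p : Lam L, Dfun ρ s L cH h p
        = ∑' K : Fin (L + 1) → V, ‖cH K‖ * Real.exp (R * ∑ j : Fin (L + 1), swt s (K j)) := by
  set B := ∑' k, nh ρ s h k with hB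
  have hinner : ∀ K : Fin (L + 1) → V,
      HasSum (fun T : Fin (L + 1) → Gam => ∏ j : Fin (L + 1), dfun ρ s h (K j) (T j))
        (∏ j : Fin (L + 1), Real.exp (swt s (K j) * B)) := by
    intro K
    have hpi := hasSum_pi (L + 1) (fun j => dfun ρ s h (K j))
      (fun j => (dfun_gamma hhs (K j)).2)
    have hval : (∏ j : Fin (L + 1), ∑' γ : Gam, dfun ρ s h (K j) γ)
        = ∏ j : Fin (L + 1), Real.exp (swt s (K j) * B) :=
      Finset.prod_congr rfl fun j _ => ((dfun_gamma hhs (K j)).1).tsum_eq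
    rw [← hval]
    exact hpi.1
  have hDval : ∀ K : Fin (L + 1) → V,
      (‖cH K‖ * Real.exp (ρ * ∑ j : Fin (L + 1), swt s (K j)))
          * ∏ j : Fin (L + 1), Real.exp (swt s (K j) * B)
        = ‖cH K‖ * Real.exp (R * ∑ j : Fin (L + 1), swt s (K j)) := by
    intro K
    rw [← Real.exp_sum, mul_assoc, ← Real.exp_add, hRB]
    congr 2
    rw [← Finset.sum_mul]
    ring
  have hfib : ∀ K : Fin (L + 1) → V,
      HasSum (fun T : Fin (L + 1) → Gam => Dfun ρ s L cH h (K, T))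
        (‖cH K‖ * Real.exp (R * ∑ j : Fin (L + 1), swt s (K j))) := by
    intro K
    have := (hinner K).mul_left (‖cH K‖ * Real.exp (ρ * ∑ j : Fin (L + 1), swt s (K j)))
    rw [hDval K] at this
    exact this
  have hsummD : Summable (Dfun ρ s L cH h) := by
    refine (summable_prod_of_nonneg fun p => Dfun_nonneg p).mpr ⟨fun K => (hfib K).summable, ?_⟩
    refine hcH.congr fun K => ?_
    exact ((hfib K).tsum_eq).symm
  refine ⟨hsummD, ?_⟩
  rw [Summable.tsum_prod' hsummD (fun K => (hfib K).summable)]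
  exact tsum_congr fun K => (hfib K).tsum_eq

end analysis

end Stmt9

namespace Stmt9

section strip

variable {ρ s ω : ℝ} {α : ℕ → ℝ} {h : V → ℂ} {L : ℕ} {cH : (Fin (L + 1) → V) → ℂ}

lemma gvec_summable (hρ : 0 ≤ ρ) (hhs : Summable (nh ρ s h)) {σ : ℕ → ℂ}
    (hσ : σ ∈ Strip ρ s) (j : ℕ) :
    Summable fun k : V => ‖h k * Complex.exp (Complex.I * cdot k (uvec ω α σ j))‖ := by
  refine Summable.of_nonneg_of_le (fun k => norm_nonneg _) (fun k => ?_) hhs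
  rw [norm_mul]
  exact mul_le_mul_of_nonneg_left
    (norm_exp_I_cdot_le hρ (uvec_mem_strip hσ j) k) (norm_nonneg _)

lemma ffun_hasSum (hρ : 0 ≤ ρ) (hhs : Summable (nh ρ s h)) {σ : ℕ → ℂ}
    (hσ : σ ∈ Strip ρ s) (j : ℕ) (k : V) :
    HasSum (ffun ω α h σ j k)
      (Complex.exp (Complex.I * cdot k (uvec ω α σ j))
        * Complex.exp (zc α k * aeval h (uvec ω α σ j))) ∧
      Summable fun γ : Gam => ‖ffun ω α h σ j k γ‖ := by
  set g : V → ℂ := fun k' => h k' * Complex.exp (Complex.I * cdot k' (uvec ω α σ j)) with hg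
  have hgs : Summable fun k' => ‖g k'‖ := gvec_summable hρ hhs hσ j
  obtain ⟨hn, hsum⟩ := gamma_lemma g hgs (zc α k)
  have haev : aeval h (uvec ω α σ j) = ∑' k', g k' := rfl
  have hdef : ffun ω α h σ j k = fun γ : Gam =>
      Complex.exp (Complex.I * cdot k (uvec ω α σ j))
        * (zc α k ^ γ.1 / (γ.1.factorial : ℂ) * ∏ i, g (γ.2 i)) := by
    funext γ
    unfold ffun
    rw [mul_assoc]
  constructor
  · rw [hdef, haev, Complex.exp_eq_exp_ℂ]
    exact hsum.mul_left _
  · rw [hdef]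
    refine (hn.mul_left ‖Complex.exp (Complex.I * cdot k (uvec ω α σ j))‖).congr fun γ => ?_
    simp [norm_mul]

end strip

end Stmt9

open Stmt9 in
theorem stmt9 (ρ s ω : ℝ) (hρ : 0 < ρ) (hs : 0 < s)
    (α : ℕ → ℝ) (hα : ∀ j, α j ∈ Set.Icc (0 : ℝ) 1)
    (L : ℕ) (cH : (Fin (L + 1) → (ℕ →₀ ℤ)) → ℂ) (h : (ℕ →₀ ℤ) → ℂ)
    (hh : anorm ρ s h ≠ ⊤)
    (hH : hlnorm L (ρ + (anorm ρ s h).toReal) s cH ≠ ⊤) :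
    ∃ c : (ℕ →₀ ℤ) → ℂ,
      HasCoeffsOn ρ s (psiOp L ω α cH h) c ∧
      anorm ρ s c ≤ hlnorm L (ρ + (anorm ρ s h).toReal) s cH := by
  classical
  obtain ⟨hhs0, hBeq⟩ := summable_of_enn_ne_top (f := h) (r := fun k => ρ * swt s k) hh
  have hhs : Summable (nh ρ s h) := hhs0
  have hanorm_toReal : (anorm ρ s h).toReal = ∑' k, nh ρ s h k := hBeq
  have hRB : ρ + (anorm ρ s h).toReal = ρ + ∑' k, nh ρ s h k := by rw [hanorm_toReal]
  obtain ⟨hcHs0, hHeq⟩ := summable_of_enn_ne_top (f := cH)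
    (r := fun K : Fin (L + 1) → V =>
      (ρ + (anorm ρ s h).toReal) * ∑ j : Fin (L + 1), swt s (K j)) hH
  obtain ⟨hsummD, hDsum⟩ := Dfun_props (cH := cH) hhs hRB hcHs0
  have hwgt_le : ∀ p : Lam L,
      ‖acoef ω α L cH h p‖ * Real.exp (ρ * swt s (Mdx L p)) ≤ Dfun ρ s L cH h p :=
    norm_acoef_le hρ.le hs.le hα
  have hwgt_nonneg : ∀ p : Lam L,
      0 ≤ ‖acoef ω α L cH h p‖ * Real.exp (ρ * swt s (Mdx L p)) :=
    fun p => mul_nonneg (norm_nonneg _) (Real.exp_nonneg _)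
  have hsumw : Summable (fun p : Lam L =>
      ‖acoef ω α L cH h p‖ * Real.exp (ρ * swt s (Mdx L p))) :=
    Summable.of_nonneg_of_le hwgt_nonneg hwgt_le hsummD
  have hsuma_norm : Summable (fun p : Lam L => ‖acoef ω α L cH h p‖) := by
    refine Summable.of_nonneg_of_le (fun p => norm_nonneg _) (fun p => ?_) hsumw
    nth_rewrite 1 [← mul_one ‖acoef ω α L cH h p‖]
    exact mul_le_mul_of_nonneg_left
      (Real.one_le_exp (mul_nonneg hρ.le (swt_nonneg s _))) (norm_nonneg _)
  have hsuma : Summable (acoef ω α L cH h) := hsuma_norm.of_norm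
  refine ⟨fun m : V => ∑' x : {p : Lam L // Mdx L p = m}, acoef ω α L cH h (x : Lam L),
    ?_, ?_⟩
  · -- HasCoeffsOn
    intro σ hσ
    set tσ : Lam L → ℂ :=
      fun p => acoef ω α L cH h p * Complex.exp (Complex.I * cdot (Mdx L p) σ) with htσ
    have htnorm : Summable tσ := by
      refine Summable.of_norm_bounded hsumw (fun p => ?_)
      rw [htσ, norm_mul]
      exact mul_le_mul_of_nonneg_left (norm_exp_I_cdot_le hρ.le hσ _) (norm_nonneg _)
    have htHasSum : HasSum tσ (∑' p, tσ p) := htnorm.hasSum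
    have hKfib : ∀ K : Fin (L + 1) → V,
        HasSum (fun T : Fin (L + 1) → Gam => tσ (K, T))
          (cH K * Complex.exp (Complex.I * ∑ j : Fin (L + 1), cdot (K j)
            (fun m => σ m + ((j : ℕ) : ℂ) * (ω : ℂ) * (α m : ℂ)
              + (α m : ℂ) * aeval h (fun m' => σ m' + ((j : ℕ) : ℂ) * (ω : ℂ) * (α m' : ℂ))))) := by
      intro K
      have hj : ∀ j : Fin (L + 1),
          HasSum (ffun ω α h σ (j : ℕ) (K j))
            (Complex.exp (Complex.I * cdot (K j) (uvec ω α σ (j : ℕ)))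
              * Complex.exp (zc α (K j) * aeval h (uvec ω α σ (j : ℕ)))) ∧
          Summable fun γ : Gam => ‖ffun ω α h σ (j : ℕ) (K j) γ‖ :=
        fun j => ffun_hasSum hρ.le hhs hσ (j : ℕ) (K j)
      have hpi := hasSum_pi (L + 1) (fun j => ffun ω α h σ (j : ℕ) (K j)) (fun j => (hj j).2)
      have hval : (∏ j : Fin (L + 1), ∑' γ : Gam, ffun ω α h σ (j : ℕ) (K j) γ)
          = ∏ j : Fin (L + 1),
            (Complex.exp (Complex.I * cdot (K j) (uvec ω α σ (j : ℕ)))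
              * Complex.exp (zc α (K j) * aeval h (uvec ω α σ (j : ℕ)))) :=
        Finset.prod_congr rfl fun j _ => ((hj j).1).tsum_eq
      have hpi1 := (hval ▸ hpi.1).mul_left (cH K)
      have hfun : (fun T : Fin (L + 1) → Gam =>
          cH K * ∏ j : Fin (L + 1), ffun ω α h σ (j : ℕ) (K j) (T j))
          = fun T => tσ (K, T) := by
        funext T
        exact acoef_exp_eq σ (K, T)
      have hv : ∀ j : Fin (L + 1),
          cdot (K j) (fun m => σ m + ((j : ℕ) : ℂ) * (ω : ℂ) * (α m : ℂ)
              + (α m : ℂ) * aeval h (fun m' => σ m' + ((j : ℕ) : ℂ) * (ω : ℂ) * (α m' : ℂ)))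
            = cdot (K j) (uvec ω α σ (j : ℕ))
              + aeval h (uvec ω α σ (j : ℕ)) * ((adot α (K j) : ℝ) : ℂ) := by
        intro j
        have hlam : (fun m => σ m + ((j : ℕ) : ℂ) * (ω : ℂ) * (α m : ℂ)
              + (α m : ℂ) * aeval h (fun m' => σ m' + ((j : ℕ) : ℂ) * (ω : ℂ) * (α m' : ℂ)))
            = fun m => uvec ω α σ (j : ℕ) m
              + (aeval h (uvec ω α σ (j : ℕ))) * ((α m : ℝ) : ℂ) := by
          funext m
          unfold uvec
          ring
        rw [hlam]
        exact cdot_shift (K j) (uvec ω α σ (j : ℕ)) _ α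
      have hvalue : cH K * (∏ j : Fin (L + 1),
            (Complex.exp (Complex.I * cdot (K j) (uvec ω α σ (j : ℕ)))
              * Complex.exp (zc α (K j) * aeval h (uvec ω α σ (j : ℕ)))))
          = cH K * Complex.exp (Complex.I * ∑ j : Fin (L + 1), cdot (K j)
            (fun m => σ m + ((j : ℕ) : ℂ) * (ω : ℂ) * (α m : ℂ)
              + (α m : ℂ) * aeval h (fun m' => σ m' + ((j : ℕ) : ℂ) * (ω : ℂ) * (α m' : ℂ)))) := by
        congr 1
        rw [Finset.mul_sum, Complex.exp_sum]
        refine Finset.prod_congr rfl fun j _ => ?_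
        rw [hv j, mul_add, Complex.exp_add]
        congr 2
        unfold zc
        ring
      rw [hfun, hvalue] at hpi1
      exact hpi1
    have hKsum := HasSum.prod_fiberwise htHasSum hKfib
    have hpsi : psiOp L ω α cH h σ
        = ∑' K : Fin (L + 1) → V, cH K * Complex.exp (Complex.I * ∑ j : Fin (L + 1), cdot (K j)
            (fun m => σ m + ((j : ℕ) : ℂ) * (ω : ℂ) * (α m : ℂ)
              + (α m : ℂ) * aeval h (fun m' => σ m' + ((j : ℕ) : ℂ) * (ω : ℂ) * (α m' : ℂ)))) := rfl
    have hpsiS : psiOp L ω α cH h σ = ∑' p, tσ p := by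
      rw [hpsi, hKsum.tsum_eq]
    have hfibM : ∀ m : V, HasSum (fun x : {p : Lam L // Mdx L p = m} => tσ (x : Lam L))
        ((∑' x : {p : Lam L // Mdx L p = m}, acoef ω α L cH h (x : Lam L))
          * Complex.exp (Complex.I * cdot m σ)) := by
      intro m
      have hsub : Summable (fun x : {p : Lam L // Mdx L p = m} =>
          acoef ω α L cH h (x : Lam L)) := hsuma.subtype _
      have hmr := hsub.hasSum.mul_right (Complex.exp (Complex.I * cdot m σ))
      have hfe : (fun x : {p : Lam L // Mdx L p = m} =>
          acoef ω α L cH h (x : Lam L) * Complex.exp (Complex.I * cdot m σ))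
          = fun x : {p : Lam L // Mdx L p = m} => tσ (x : Lam L) := by
        funext x
        simp only [htσ]
        rw [x.2]
      exact hfe ▸ hmr
    have hsig0 : HasSum (tσ ∘ (Equiv.sigmaFiberEquiv (Mdx L))) (∑' p, tσ p) :=
      ((Equiv.sigmaFiberEquiv (Mdx L)).hasSum_iff).mpr htHasSum
    have hsig := hsig0.sigma hfibM
    rw [hpsiS]
    exact hsig
  · -- norm bound
    set cfun : V → ℂ :=
      fun m : V => ∑' x : {p : Lam L // Mdx L p = m}, acoef ω α L cH h (x : Lam L)
      with hcfun
    have hfibw : ∀ m : V, HasSum (fun x : {p : Lam L // Mdx L p = m} =>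
        ‖acoef ω α L cH h (x : Lam L)‖ * Real.exp (ρ * swt s (Mdx L (x : Lam L))))
        ((∑' x : {p : Lam L // Mdx L p = m}, ‖acoef ω α L cH h (x : Lam L)‖)
          * Real.exp (ρ * swt s m)) := by
      intro m
      have hsub : Summable (fun x : {p : Lam L // Mdx L p = m} =>
          ‖acoef ω α L cH h (x : Lam L)‖) := hsuma_norm.subtype _
      have hmr := hsub.hasSum.mul_right (Real.exp (ρ * swt s m))
      have hfe : (fun x : {p : Lam L // Mdx L p = m} =>
          ‖acoef ω α L cH h (x : Lam L)‖ * Real.exp (ρ * swt s m))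
          = fun x : {p : Lam L // Mdx L p = m} =>
            ‖acoef ω α L cH h (x : Lam L)‖ * Real.exp (ρ * swt s (Mdx L (x : Lam L))) := by
        funext x
        rw [x.2]
      exact hfe ▸ hmr
    have hw0 : HasSum ((fun p : Lam L =>
        ‖acoef ω α L cH h p‖ * Real.exp (ρ * swt s (Mdx L p)))
          ∘ (Equiv.sigmaFiberEquiv (Mdx L)))
        (∑' p : Lam L, ‖acoef ω α L cH h p‖ * Real.exp (ρ * swt s (Mdx L p))) :=
      ((Equiv.sigmaFiberEquiv (Mdx L)).hasSum_iff).mpr hsumw.hasSum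
    have hcreal := hw0.sigma hfibw
    have hterm : ∀ m : V,
        (‖∑' x : {p : Lam L // Mdx L p = m}, acoef ω α L cH h (x : Lam L)‖₊ : ENNReal)
            * ENNReal.ofReal (Real.exp (ρ * swt s m))
          ≤ ENNReal.ofReal
            ((∑' x : {p : Lam L // Mdx L p = m}, ‖acoef ω α L cH h (x : Lam L)‖)
              * Real.exp (ρ * swt s m)) := by
      intro m
      rw [← ENNReal.ofReal_coe_nnreal, coe_nnnorm, ← ENNReal.ofReal_mul (norm_nonneg _)]
      exact ENNReal.ofReal_le_ofReal (mul_le_mul_of_nonneg_right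
        (norm_tsum_le_tsum_norm (hsuma_norm.subtype _)) (Real.exp_nonneg _))
    have hstart : anorm ρ s cfun
        = ∑' m : V, (‖cfun m‖₊ : ENNReal) * ENNReal.ofReal (Real.exp (ρ * swt s m)) := rfl
    calc anorm ρ s cfun
        ≤ ∑' m : V, ENNReal.ofReal
            ((∑' x : {p : Lam L // Mdx L p = m}, ‖acoef ω α L cH h (x : Lam L)‖)
              * Real.exp (ρ * swt s m)) := by
          rw [hstart]
          refine ENNReal.tsum_le_tsum fun m => ?_
          rw [hcfun]
          exact hterm m
      _ = ENNReal.ofReal (∑' m : V,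
            (∑' x : {p : Lam L // Mdx L p = m}, ‖acoef ω α L cH h (x : Lam L)‖)
              * Real.exp (ρ * swt s m)) :=
          (ENNReal.ofReal_tsum_of_nonneg
            (fun m => mul_nonneg (tsum_nonneg fun x => norm_nonneg _) (Real.exp_nonneg _))
            hcreal.summable).symm
      _ = ENNReal.ofReal (∑' p : Lam L,
            ‖acoef ω α L cH h p‖ * Real.exp (ρ * swt s (Mdx L p))) := by
          rw [hcreal.tsum_eq]
      _ ≤ ENNReal.ofReal (∑' p : Lam L, Dfun ρ s L cH h p) :=
          ENNReal.ofReal_le_ofReal (Summable.tsum_le_tsum hwgt_le hsumw hsummD)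
      _ = ENNReal.ofReal (∑' K : Fin (L + 1) → V,
            ‖cH K‖ * Real.exp ((ρ + (anorm ρ s h).toReal) * ∑ j : Fin (L + 1), swt s (K j))) := by
          rw [hDsum]
      _ = ENNReal.ofReal ((hlnorm L (ρ + (anorm ρ s h).toReal) s cH).toReal) :=
          congrArg ENNReal.ofReal hHeq.symm
      _ = hlnorm L (ρ + (anorm ρ s h).toReal) s cH := ENNReal.ofReal_toReal hH
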